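/- Let A be a unital C*-algebra that admits, for every positive integer m, an irreducible representation of finite dimension at least m (i.e., the set of dimensions of finite-dimensional irreducible representations of A is unbounded). Then every A-monotone continuous function f : [0,∞) → ℝ is matrix monotone of every order, hence operator monotone: P_A = P_∞. -/

import Mathlib

noncomputable section

/-- `f` is `A`-monotone: for self-adjoint `x ≤ y` with spectra in `[0,∞)`,
`f(x) ≤ f(y)` via the continuous functional calculus. -/
def AMonotone (A : Type) [CStarAlgebra A] [PartialOrder A] [StarOrderedRing A]
    (f : ℝ → ℝ) : Prop :=
  ∀ x y : A, IsSelfAdjoint x → IsSelfAdjoint y →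
    spectrum ℝ x ⊆ Set.Ici (0:ℝ) → spectrum ℝ y ⊆ Set.Ici (0:ℝ) →
    x ≤ y → cfc f x ≤ cfc f y

/-- The C*-algebra of `n × n` complex matrices, realized as operators on
`n`-dimensional complex Hilbert space. -/
abbrev MatAlg (n : ℕ) := EuclideanSpace ℂ (Fin n) →L[ℂ] EuclideanSpace ℂ (Fin n)

/-- `f` is matrix monotone of order `n`. -/
def MatrixMonotone (n : ℕ) (f : ℝ → ℝ) : Prop := AMonotone (MatAlg n) f

/-- A (unital) representation of `A` on a Hilbert space `H` is (topologically)
irreducible if the only closed invariant subspaces are trivial. -/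
def IsIrreducibleRep {A : Type} [CStarAlgebra A] {H : Type} [NormedAddCommGroup H]
    [InnerProductSpace ℂ H] [CompleteSpace H] (π : A →⋆ₐ[ℂ] (H →L[ℂ] H)) : Prop :=
  ∀ K : Submodule ℂ H, IsClosed (K : Set H) → (∀ a : A, ∀ x ∈ K, π a x ∈ K) → K = ⊥ ∨ K = ⊤

open scoped InnerProductSpace ComplexConjugate

set_option maxHeartbeats 1000000
set_option synthInstance.maxHeartbeats 200000

section OrderTransfer

variable {A B : Type*} [CStarAlgebra A] [PartialOrder A] [StarOrderedRing A]
  [CStarAlgebra B] [PartialOrder B] [StarOrderedRing B]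

lemma StarAlgHom.map_nonneg' (φ : A →⋆ₐ[ℂ] B) {a : A} (ha : 0 ≤ a) : 0 ≤ φ a := by
  have h := CFC.sqrt_mul_sqrt_self a ha
  have hsa : IsSelfAdjoint (CFC.sqrt a) := .of_nonneg (CFC.sqrt_nonneg a)
  calc (0:B) ≤ star (φ (CFC.sqrt a)) * φ (CFC.sqrt a) := star_mul_self_nonneg _
  _ = φ a := by rw [← map_star, ← map_mul, hsa.star_eq, h]

lemma StarAlgHom.mono' (φ : A →⋆ₐ[ℂ] B) {a b : A} (hab : a ≤ b) : φ a ≤ φ b := by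
  rw [← sub_nonneg] at hab ⊢
  simpa [map_sub] using φ.map_nonneg' hab

lemma StarAlgHom.exists_nonneg_preimage (φ : A →⋆ₐ[ℂ] B) (hφ : Function.Surjective φ)
    {x : B} (hx : 0 ≤ x) : ∃ a : A, 0 ≤ a ∧ φ a = x := by
  obtain ⟨c, hc⟩ := hφ (CFC.sqrt x)
  refine ⟨star c * c, star_mul_self_nonneg c, ?_⟩
  rw [map_mul, map_star, hc, (IsSelfAdjoint.of_nonneg (CFC.sqrt_nonneg x)).star_eq,
    CFC.sqrt_mul_sqrt_self x hx]

end OrderTransfer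

section Projection

variable {E : Type*} [NormedAddCommGroup E] [InnerProductSpace ℂ E]

/-- The orthogonal projection onto a subspace invariant under `b` and its formal adjoint `b'`
commutes with `b`. -/
lemma orthProj_comm (K : Submodule ℂ E) [K.HasOrthogonalProjection]
    (b b' : E →ₗ[ℂ] E)
    (hbb' : ∀ x y : E, ⟪b x, y⟫_ℂ = ⟪x, b' y⟫_ℂ)
    (hb : ∀ x ∈ K, b x ∈ K) (hb' : ∀ x ∈ K, b' x ∈ K) (x : E) :
    (K.orthogonalProjection (b x) : E) = b (K.orthogonalProjection x) := by
  have hmem : x - K.orthogonalProjection x ∈ Kᗮ := K.sub_starProjection_mem_orthogonal x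
  have h1 : b (x - K.orthogonalProjection x) ∈ Kᗮ := by
    rw [Submodule.mem_orthogonal']
    intro u hu
    rw [hbb']
    exact (Submodule.mem_orthogonal' K _).mp hmem _ (hb' u hu)
  have hsplit : b x = b (↑(K.orthogonalProjection x)) + b (x - K.orthogonalProjection x) := by
    rw [← map_add]
    congr 1
    abel
  have h2 : (K.orthogonalProjection (b (↑(K.orthogonalProjection x))) : E)
      = b (↑(K.orthogonalProjection x)) :=
    Submodule.starProjection_eq_self_iff.mpr (hb _ (K.orthogonalProjection x).2)
  rw [hsplit, map_add, Submodule.orthogonalProjectionOnto_apply_of_mem_orthogonal h1,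
    add_zero, h2]

end Projection

section Rep

variable {A : Type} [CStarAlgebra A] {k : ℕ}

/-- Schur's lemma: anything commuting with an irreducible representation is scalar. -/
lemma schur_scalar (hk : 0 < k) (π : A →⋆ₐ[ℂ] MatAlg k) (hirr : IsIrreducibleRep π)
    (S : EuclideanSpace ℂ (Fin k) →ₗ[ℂ] EuclideanSpace ℂ (Fin k))
    (hS : ∀ (a : A) (v : EuclideanSpace ℂ (Fin k)), π a (S v) = S (π a v)) :
    ∃ μ : ℂ, ∀ v, S v = μ • v := by
  have : Nontrivial (EuclideanSpace ℂ (Fin k)) := by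
    refine ⟨EuclideanSpace.single ⟨0, hk⟩ 1, 0, fun h => ?_⟩
    have := congrArg (· ⟨0, hk⟩) h
    simp [EuclideanSpace.single_apply] at this
  obtain ⟨μ, hμ⟩ := Module.End.exists_eigenvalue (S : Module.End ℂ (EuclideanSpace ℂ (Fin k)))
  refine ⟨μ, ?_⟩
  set K := Module.End.eigenspace (S : Module.End ℂ (EuclideanSpace ℂ (Fin k))) μ with hK
  have hKcl : IsClosed (K : Set (EuclideanSpace ℂ (Fin k))) :=
    Submodule.closed_of_finiteDimensional K
  have hKinv : ∀ a : A, ∀ x ∈ K, π a x ∈ K := by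
    intro a x hx
    rw [Module.End.mem_eigenspace_iff] at hx ⊢
    show S (π a x) = μ • π a x
    rw [← hS, hx, map_smul]
  rcases hirr K hKcl hKinv with h | h
  · exact absurd h (Module.End.hasEigenvalue_iff.mp hμ)
  · intro v
    have hv : v ∈ K := h ▸ Submodule.mem_top
    exact Module.End.mem_eigenspace_iff.mp hv

/-- A finite-dimensional irreducible representation is surjective. -/
lemma rep_surjective (hk : 0 < k) (π : A →⋆ₐ[ℂ] MatAlg k) (hirr : IsIrreducibleRep π) :
    Function.Surjective π := by
  classical
  intro T
  set H := EuclideanSpace ℂ (Fin k) with hHdef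
  let E := PiLp 2 (fun _ : Fin k => H)
  -- the diagonal action of an operator on `E`
  let diag : (H →L[ℂ] H) → E →ₗ[ℂ] E := fun S =>
    { toFun := fun x => (WithLp.toLp 2 (fun i => S (x i)) : E)
      map_add' := fun x y => PiLp.ext fun i => map_add S _ _
      map_smul' := fun c x => PiLp.ext fun i => map_smul S _ _ }
  -- the orbit map of the standard "basis vector tuple"
  let Φ : A →ₗ[ℂ] E :=
    { toFun := fun a => (WithLp.toLp 2 (fun i => π a (EuclideanSpace.single i 1)) : E)
      map_add' := fun a b => PiLp.ext fun i => by simp only [map_add]; rfl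
      map_smul' := fun c a => PiLp.ext fun i => by
        simp only [map_smul, RingHom.id_apply]; rfl }
  let V : Submodule ℂ E := LinearMap.range Φ
  have hVinv : ∀ (a : A), ∀ x ∈ V, diag (π a) x ∈ V := by
    rintro a _ ⟨b, rfl⟩
    exact ⟨a * b, PiLp.ext fun i => by simp [diag, Φ]⟩
  have hPcomm : ∀ (a : A) (x : E),
      (V.orthogonalProjection (diag (π a) x) : E) = diag (π a) (V.orthogonalProjection x) := by
    intro a x
    refine orthProj_comm V (diag (π a)) (diag (π (star a))) ?_ (hVinv a) (hVinv (star a)) x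
    intro x y
    rw [PiLp.inner_apply, PiLp.inner_apply]
    refine Finset.sum_congr rfl fun i _ => ?_
    show ⟪π a (x i), y i⟫_ℂ = ⟪x i, π (star a) (y i)⟫_ℂ
    rw [map_star, ContinuousLinearMap.star_eq_adjoint, ContinuousLinearMap.adjoint_inner_right]
  -- the blocks of the projection commute with `π`, hence are scalars
  have hblk : ∀ i j : Fin k, ∃ μ : ℂ, ∀ v : H,
      (V.orthogonalProjection ((WithLp.toLp 2 (Pi.single j v) : E)) : E) i = μ • v := by
    intro i j
    let eL : E ≃ₗ[ℂ] (∀ _ : Fin k, H) := WithLp.linearEquiv 2 ℂ _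
    let Slin : H →ₗ[ℂ] H :=
      (LinearMap.proj i) ∘ₗ eL.toLinearMap ∘ₗ V.subtype ∘ₗ
        ((V.orthogonalProjection : E →L[ℂ] V) : E →ₗ[ℂ] V) ∘ₗ
        eL.symm.toLinearMap ∘ₗ LinearMap.single ℂ (fun _ => H) j
    have hScomm : ∀ (a : A) (v : H), π a (Slin v) = Slin (π a v) := by
      intro a v
      show π a ((V.orthogonalProjection ((WithLp.toLp 2 (Pi.single j v) : E)) : E) i)
        = (V.orthogonalProjection ((WithLp.toLp 2 (Pi.single j (π a v)) : E)) : E) i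
      have hsingle : (WithLp.toLp 2 (Pi.single j (π a v)) : E) = diag (π a) (WithLp.toLp 2 (Pi.single j v) : E) := by
        refine PiLp.ext fun l => ?_
        show _ = π a ((WithLp.toLp 2 (Pi.single j v) : E) l)
        rcases eq_or_ne l j with rfl | hlj
        · simp
        · simp [Pi.single_eq_of_ne hlj]
      rw [hsingle, hPcomm a]
      rfl
    obtain ⟨μ, hμ⟩ := schur_scalar hk π hirr Slin hScomm
    exact ⟨μ, hμ⟩
  choose μmat hμmat using hblk
  -- the projection written in terms of its blocks
  have hPblocks : ∀ (x : E) (i : Fin k),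
      (V.orthogonalProjection x : E) i = ∑ j, μmat i j • x j := by
    intro x i
    have hx : x = ∑ j, (WithLp.toLp 2 (Pi.single j (x j)) : E) := by
      refine PiLp.ext fun l => ?_
      show x l = (∑ j, (WithLp.toLp 2 (Pi.single j (x j)) : E)) l
      rw [show (∑ j, (WithLp.toLp 2 (Pi.single j (x j)) : E)) l = ∑ j, (Pi.single j (x j) : (∀ _ : Fin k, H)) l
        from by rw [WithLp.ofLp_sum]; exact Finset.sum_apply l _ _]
      simp [Pi.single_apply]
    conv_lhs => rw [hx]
    rw [map_sum]
    have : ((∑ j, V.orthogonalProjection (WithLp.toLp 2 (Pi.single j (x j)) : E) : V) : E) i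
        = ∑ j, (V.orthogonalProjection (WithLp.toLp 2 (Pi.single j (x j)) : E) : E) i := by
      rw [Submodule.coe_sum]
      rw [WithLp.ofLp_sum]
      exact Finset.sum_apply i _ _
    rw [this]
    exact Finset.sum_congr rfl fun j _ => hμmat i j (x j)
  -- hence the projection commutes with the diagonal action of ANY operator
  have hPT : ∀ x : E, (V.orthogonalProjection (diag T x) : E) = diag T (V.orthogonalProjection x) := by
    intro x
    refine PiLp.ext fun i => ?_
    show (V.orthogonalProjection (diag T x) : E) i = T ((V.orthogonalProjection x : E) i)
    rw [hPblocks, hPblocks]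
    rw [map_sum]
    refine Finset.sum_congr rfl fun j _ => ?_
    show μmat i j • T (x j) = T (μmat i j • x j)
    rw [map_smul]
  -- conclude
  have hv : (Φ 1 : E) ∈ V := ⟨1, rfl⟩
  have hPv : (V.orthogonalProjection (Φ 1) : E) = Φ 1 := Submodule.starProjection_eq_self_iff.mpr hv
  have hmem : diag T (Φ 1) ∈ V := by
    rw [← hPv, ← hPT]
    exact Submodule.coe_mem _
  obtain ⟨a, ha⟩ := hmem
  refine ⟨a, ?_⟩
  apply ContinuousLinearMap.coe_injective
  apply Module.Basis.ext (EuclideanSpace.basisFun (Fin k) ℂ).toBasis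
  intro i
  have := congrArg (· i) ha
  show π a (EuclideanSpace.basisFun (Fin k) ℂ i) = T (EuclideanSpace.basisFun (Fin k) ℂ i)
  rw [EuclideanSpace.basisFun_apply]
  have h1 : π a (EuclideanSpace.single i 1) = T (π 1 (EuclideanSpace.single i 1)) := this
  rwa [map_one π] at h1

end Rep

section Step1

variable {A : Type} [CStarAlgebra A] [PartialOrder A] [StarOrderedRing A] {k : ℕ}

lemma step1 (π : A →⋆ₐ[ℂ] MatAlg k) (hπ : Function.Surjective π)
    (f : ℝ → ℝ) (hf : ContinuousOn f (Set.Ici (0:ℝ))) (hA : AMonotone A f) :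
    MatrixMonotone k f := by
  intro x y hx hy hsx hsy hxy
  have hx0 : 0 ≤ x := (StarOrderedRing.nonneg_iff_spectrum_nonneg (R := ℝ) x hx).mpr
    (fun t ht => hsx ht)
  obtain ⟨a, ha0, rfl⟩ := π.exists_nonneg_preimage hπ hx0
  obtain ⟨c, hc0, hc⟩ := π.exists_nonneg_preimage hπ (sub_nonneg.mpr hxy)
  set b := a + c with hb
  have hb0 : 0 ≤ b := add_nonneg ha0 hc0
  have hπb : π b = y := by rw [hb, map_add, hc]; abel
  have hab : a ≤ b := le_add_of_nonneg_right hc0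
  have hsa : IsSelfAdjoint a := .of_nonneg ha0
  have hsb : IsSelfAdjoint b := .of_nonneg hb0
  have hspa : spectrum ℝ a ⊆ Set.Ici (0:ℝ) := fun t ht => spectrum_nonneg_of_nonneg ha0 ht
  have hspb : spectrum ℝ b ⊆ Set.Ici (0:ℝ) := fun t ht => spectrum_nonneg_of_nonneg hb0 ht
  have key := hA a b hsa hsb hspa hspb hab
  have hmono := π.mono' key
  have hπcont : Continuous π := AddMonoidHomClass.continuous_of_bound π 1
    (fun a => by simpa using NonUnitalStarAlgHom.norm_apply_le π a)
  rwa [StarAlgHom.map_cfc π f a (hf.mono hspa) hπcont hsa (hsa.map π),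
    StarAlgHom.map_cfc π f b (hf.mono hspb) hπcont hsb (hsb.map π),
    hπb] at hmono

end Step1

section Step2

lemma cfc_eq_cfcn_add {D : Type*} [CStarAlgebra D] [PartialOrder D] [StarOrderedRing D]
    (f : ℝ → ℝ) (hf : ContinuousOn f (Set.Ici (0:ℝ))) {z : D} (hz : IsSelfAdjoint z)
    (hsp : spectrum ℝ z ⊆ Set.Ici (0:ℝ)) :
    cfc f z = cfcₙ (fun t => f t - f 0) z + algebraMap ℝ D (f 0) := by
  have hq : quasispectrum ℝ z ⊆ Set.Ici (0:ℝ) := by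
    rw [quasispectrum_eq_spectrum_union_zero]
    exact Set.union_subset hsp (by simp)
  have hg : ContinuousOn (fun t => f t - f 0) (spectrum ℝ z) :=
    (hf.mono hsp).sub continuousOn_const
  have h1 : cfcₙ (fun t => f t - f 0) z = cfc (fun t => f t - f 0) z :=
    cfcₙ_eq_cfc ((hf.mono hq).sub continuousOn_const) (by simp)
  rw [h1, ← cfc_const (f 0) z hz, ← cfc_add z _ _ hg (by fun_prop)]
  exact cfc_congr fun t _ => by ring

lemma step2 {n d : ℕ} (f : ℝ → ℝ) (hf : ContinuousOn f (Set.Ici (0:ℝ)))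
    (hk : MatrixMonotone (n + d) f) : MatrixMonotone n f := by
  classical
  intro x y hx hy hsx hsy hxy
  -- the isometric inclusion of Hilbert spaces
  let Jlin : EuclideanSpace ℂ (Fin n) →ₗ[ℂ] EuclideanSpace ℂ (Fin (n + d)) :=
    { toFun := fun v => (WithLp.toLp 2 (fun i => if h : (i:ℕ) < n then v ⟨i, h⟩ else 0) :
        EuclideanSpace ℂ (Fin (n + d)))
      map_add' := fun u v => PiLp.ext fun i => by
        by_cases h : (i:ℕ) < n <;> simp [h]
      map_smul' := fun c v => PiLp.ext fun i => by
        by_cases h : (i:ℕ) < n <;> simp [h] }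
  let J : EuclideanSpace ℂ (Fin n) →L[ℂ] EuclideanSpace ℂ (Fin (n + d)) :=
    LinearMap.toContinuousLinearMap Jlin
  let Klin : EuclideanSpace ℂ (Fin (n + d)) →ₗ[ℂ] EuclideanSpace ℂ (Fin n) :=
    { toFun := fun w => (WithLp.toLp 2 (fun j => w (Fin.castAdd d j)) : EuclideanSpace ℂ (Fin n))
      map_add' := fun u v => rfl
      map_smul' := fun c v => rfl }
  let Jd : EuclideanSpace ℂ (Fin (n + d)) →L[ℂ] EuclideanSpace ℂ (Fin n) :=
    LinearMap.toContinuousLinearMap Klin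
  have hJ_cast : ∀ (v : EuclideanSpace ℂ (Fin n)) (j : Fin n), J v (Fin.castAdd d j) = v j := by
    intro v j
    show (if h : ((Fin.castAdd d j : Fin (n+d)) : ℕ) < n
      then v ⟨(Fin.castAdd d j : Fin (n+d)), h⟩ else 0) = v j
    rw [dif_pos (by simpa using j.isLt)]
    rfl
  have hJ_nat : ∀ (v : EuclideanSpace ℂ (Fin n)) (j : Fin d), J v (Fin.natAdd n j) = 0 := by
    intro v j
    show (if h : ((Fin.natAdd n j : Fin (n+d)) : ℕ) < n
      then v ⟨(Fin.natAdd n j : Fin (n+d)), h⟩ else 0) = 0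
    rw [dif_neg (by simp)]
  have hJdJ : ∀ v, Jd (J v) = v := by
    intro v
    refine PiLp.ext fun j => ?_
    show J v (Fin.castAdd d j) = v j
    exact hJ_cast v j
  have hadj : Jd = ContinuousLinearMap.adjoint J := by
    rw [ContinuousLinearMap.eq_adjoint_iff]
    intro w v
    rw [PiLp.inner_apply, PiLp.inner_apply]
    rw [Fin.sum_univ_add]
    have h2 : ∀ j : Fin d, ⟪w (Fin.natAdd n j), J v (Fin.natAdd n j)⟫_ℂ = 0 := by
      intro j; rw [hJ_nat v j, inner_zero_right]
    rw [Finset.sum_congr rfl (fun j _ => h2 j), Finset.sum_const_zero, add_zero]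
    refine Finset.sum_congr rfl fun j _ => ?_
    rw [hJ_cast v j]
    rfl
  -- the compression embedding of operator algebras
  let ι : MatAlg n →ₗ[ℂ] MatAlg (n + d) :=
    { toFun := fun S => J ∘L S ∘L Jd
      map_add' := fun S T => by
        simp [ContinuousLinearMap.add_comp, ContinuousLinearMap.comp_add]
      map_smul' := fun c S => by
        simp [ContinuousLinearMap.smul_comp, ContinuousLinearMap.comp_smul] }
  have hι_star : ∀ S : MatAlg n, star (ι S) = ι (star S) := by
    intro S
    show star (J ∘L S ∘L Jd) = J ∘L star S ∘L Jd
    rw [ContinuousLinearMap.star_eq_adjoint, ContinuousLinearMap.star_eq_adjoint, hadj,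
      ContinuousLinearMap.adjoint_comp, ContinuousLinearMap.adjoint_comp,
      ContinuousLinearMap.adjoint_adjoint]
    rfl
  have hι_mul : ∀ S T : MatAlg n, ι (S * T) = ι S * ι T := by
    intro S T
    refine ContinuousLinearMap.ext fun v => ?_
    show J (S (T (Jd v))) = J (S (Jd (J (T (Jd v)))))
    rw [hJdJ]
  let ιhom : MatAlg n →⋆ₙₐ[ℂ] MatAlg (n + d) :=
    { toFun := fun S => ι S
      map_add' := map_add ι
      map_smul' := map_smul ι
      map_mul' := hι_mul
      map_zero' := map_zero ι
      map_star' := fun S => (hι_star S).symm ▸ rfl }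
  haveI : FiniteDimensional ℂ (MatAlg n) :=
    LinearEquiv.finiteDimensional
      (LinearMap.toContinuousLinearMap :
        (EuclideanSpace ℂ (Fin n) →ₗ[ℂ] EuclideanSpace ℂ (Fin n)) ≃ₗ[ℂ] MatAlg n)
  have hιcont : Continuous ιhom := by
    have : Continuous ι := ι.continuous_of_finiteDimensional
    exact this
  -- positivity transfer
  have hι_pos : ∀ S : MatAlg n, 0 ≤ S → 0 ≤ ιhom S := by
    intro S hS
    rw [ContinuousLinearMap.nonneg_iff_isPositive] at hS ⊢
    have h := hS.conj_adjoint J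
    rwa [← hadj] at h
  have hι_refl : ∀ S : MatAlg n, 0 ≤ ιhom S → 0 ≤ S := by
    intro S hS
    rw [ContinuousLinearMap.nonneg_iff_isPositive] at hS ⊢
    have h := hS.adjoint_conj J
    rw [← hadj] at h
    have heq : Jd ∘L (ιhom S ∘L J) = S := by
      refine ContinuousLinearMap.ext fun v => ?_
      show Jd (J (S (Jd (J v)))) = S v
      rw [hJdJ, hJdJ]
    rwa [heq] at h
  -- set up the big matrices
  have hx0 : 0 ≤ x := (StarOrderedRing.nonneg_iff_spectrum_nonneg (R := ℝ) x hx).mpr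
    (fun t ht => hsx ht)
  have hy0 : 0 ≤ y := (StarOrderedRing.nonneg_iff_spectrum_nonneg (R := ℝ) y hy).mpr
    (fun t ht => hsy ht)
  set X := ιhom x with hXdef
  set Y := ιhom y with hYdef
  have hX0 : 0 ≤ X := hι_pos x hx0
  have hY0 : 0 ≤ Y := hι_pos y hy0
  have hXY : X ≤ Y := by
    rw [← sub_nonneg, ← map_sub]
    exact hι_pos _ (sub_nonneg.mpr hxy)
  have hsX : IsSelfAdjoint X := .of_nonneg hX0
  have hsY : IsSelfAdjoint Y := .of_nonneg hY0
  have hspX : spectrum ℝ X ⊆ Set.Ici (0:ℝ) := fun t ht => spectrum_nonneg_of_nonneg hX0 ht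
  have hspY : spectrum ℝ Y ⊆ Set.Ici (0:ℝ) := fun t ht => spectrum_nonneg_of_nonneg hY0 ht
  have key := hk X Y hsX hsY hspX hspY hXY
  -- translate to the non-unital calculus
  set g : ℝ → ℝ := fun t => f t - f 0 with hgdef
  have hqx : quasispectrum ℝ x ⊆ Set.Ici (0:ℝ) := by
    rw [quasispectrum_eq_spectrum_union_zero]
    exact Set.union_subset hsx (by simp)
  have hqy : quasispectrum ℝ y ⊆ Set.Ici (0:ℝ) := by
    rw [quasispectrum_eq_spectrum_union_zero]
    exact Set.union_subset hsy (by simp)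
  have hgx : ContinuousOn g (quasispectrum ℝ x) := (hf.mono hqx).sub continuousOn_const
  have hgy : ContinuousOn g (quasispectrum ℝ y) := (hf.mono hqy).sub continuousOn_const
  have hg0 : g 0 = 0 := by simp [hgdef]
  rw [cfc_eq_cfcn_add f hf hsX hspX, cfc_eq_cfcn_add f hf hsY hspY, add_le_add_iff_right] at key
  have hnatx : ιhom (cfcₙ g x) = cfcₙ g X :=
    NonUnitalStarAlgHom.map_cfcₙ ιhom g x hgx hg0 hιcont hx (hsX)
  have hnaty : ιhom (cfcₙ g y) = cfcₙ g Y :=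
    NonUnitalStarAlgHom.map_cfcₙ ιhom g y hgy hg0 hιcont hy (hsY)
  have hle : cfcₙ g x ≤ cfcₙ g y := by
    rw [← sub_nonneg]
    refine hι_refl _ ?_
    rw [map_sub, hnatx, hnaty, sub_nonneg]
    exact key
  rw [cfc_eq_cfcn_add f hf hx hsx, cfc_eq_cfcn_add f hf hy hsy, add_le_add_iff_right]
  exact hle

end Step2

theorem stmt8 (A : Type) [CStarAlgebra A] [PartialOrder A] [StarOrderedRing A]
    (hub : ∀ m : ℕ, ∃ k : ℕ, m ≤ k ∧ ∃ π : A →⋆ₐ[ℂ] MatAlg k, IsIrreducibleRep π)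
    (f : ℝ → ℝ) (hf : ContinuousOn f (Set.Ici (0:ℝ))) (hA : AMonotone A f) :
    ∀ n : ℕ, MatrixMonotone n f := by
  intro n
  obtain ⟨k, hk, π, hirr⟩ := hub (max n 1)
  have hkn : n ≤ k := le_trans (le_max_left n 1) hk
  have hk1 : 0 < k := lt_of_lt_of_le Nat.one_pos (le_trans (le_max_right n 1) hk)
  have hsurj := rep_surjective hk1 π hirr
  have hkmono : MatrixMonotone k f := step1 π hsurj f hf hA
  obtain ⟨d, rfl⟩ := Nat.exists_eq_add_of_le hkn
  exact step2 f hf hkmono
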